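/- Let M = (S,R,V) be a model and [M] = ([S],[R],[V]) its ∘-bisimulation contraction. Then for every s ∈ S, ([M],[s]) and (M,s) are ∘-bisimilar. -/

import Mathlib

/-- A Kripke model. -/
structure Model (W : Type) where
  R : W → W → Prop
  V : ℕ → W → Prop

/-- Z is a ∘-bisimulation on the model M: Z is nonempty and whenever sZs',
(Inv), (∘-Forth) and (∘-Back) hold. -/
def isCircBisim {W : Type} (M : Model W) (Z : W → W → Prop) : Prop :=
  (∃ a b, Z a b) ∧
  ∀ s s', Z s s' →
    ((∀ p, M.V p s ↔ M.V p s') ∧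
     (∀ t, M.R s t → ¬ Z s t → ∃ t', M.R s' t' ∧ Z t t') ∧
     (∀ t', M.R s' t' → ¬ Z s' t' → ∃ t, M.R s t ∧ Z t t'))

/-- The disjoint union of two models. -/
def dsum {W W' : Type} (M : Model W) (M' : Model W') : Model (W ⊕ W') where
  R x y :=
    match x, y with
    | Sum.inl a, Sum.inl b => M.R a b
    | Sum.inr a, Sum.inr b => M'.R a b
    | _, _ => False
  V p x :=
    match x with
    | Sum.inl a => M.V p a
    | Sum.inr a => M'.V p a

/-- (M,s) and (M',s') are ∘-bisimilar: some ∘-bisimulation on the disjoint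
union of M and M' relates s to s'. -/
def circBisimilar {W W' : Type} (M : Model W) (s : W) (M' : Model W') (s' : W') : Prop :=
  ∃ Z, isCircBisim (dsum M M') Z ∧ Z (Sum.inl s) (Sum.inr s')
/-- ∘-bisimilarity between two worlds of the same model M. -/
def eqw {W : Type} (M : Model W) (s t : W) : Prop := circBisimilar M s M t

/-- The ∘-bisimilarity class [s] = {t | s ≃∘ t}. -/
def cls {W : Type} (M : Model W) (s : W) : Set W := {t | eqw M s t}

/-- The worlds of the ∘-bisimulation contraction: the ∘-bisimilarity classes. -/
def ContrW {W : Type} (M : Model W) : Type := {A : Set W // ∃ s, A = cls M s}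

/-- The ∘-bisimulation contraction [M] = ([S],[R],[V]) of M:
[s][R][t] iff s'Rt' for some s' ∈ [s], t' ∈ [t]; [V](p) = {[s] | s ∈ V(p)}. -/
def contraction {W : Type} (M : Model W) : Model (ContrW M) where
  R A B := ∃ a ∈ A.1, ∃ b ∈ B.1, M.R a b
  V p A := ∃ s, M.V p s ∧ A.1 = cls M s

section Aux

variable {W : Type}

/-- forth + symmetry gives back -/
lemma bisim_of_symm {N : Model W} {Z : W → W → Prop}
    (hne : ∃ a b, Z a b)
    (hsym : ∀ x y, Z x y → Z y x)
    (hinv : ∀ s s', Z s s' → ∀ p, N.V p s ↔ N.V p s')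
    (hforth : ∀ s s', Z s s' → ∀ t, N.R s t → ¬ Z s t → ∃ t', N.R s' t' ∧ Z t t') :
    isCircBisim N Z := by
  refine ⟨hne, fun s s' h => ⟨hinv s s' h, hforth s s' h, fun t' ht' hnt' => ?_⟩⟩
  obtain ⟨t, ht, htz⟩ := hforth s' s (hsym _ _ h) t' ht' hnt'
  exact ⟨t, ht, hsym _ _ htz⟩

def Big (N : Model W) (x y : W) : Prop := ∃ Z, isCircBisim N Z ∧ Z x y

lemma eq_bisim (N : Model W) [Nonempty W] : isCircBisim N (· = ·) := by
  refine ⟨⟨Classical.arbitrary W, Classical.arbitrary W, rfl⟩, ?_⟩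
  rintro s s' rfl
  exact ⟨fun p => Iff.rfl, fun t h _ => ⟨t, h, rfl⟩, fun t h _ => ⟨t, h, rfl⟩⟩

lemma big_refl (N : Model W) [Nonempty W] (x : W) : Big N x x := ⟨_, eq_bisim N, rfl⟩

lemma symm_bisim {N : Model W} {Z : W → W → Prop} (h : isCircBisim N Z) :
    isCircBisim N (fun x y => Z x y ∨ Z y x) := by
  obtain ⟨⟨a, b, hab⟩, h2⟩ := h
  refine bisim_of_symm ⟨a, b, Or.inl hab⟩ (fun x y h => h.symm) ?_ ?_
  · rintro s s' (h | h) p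
    · exact (h2 _ _ h).1 p
    · exact ((h2 _ _ h).1 p).symm
  · rintro s s' (h | h) t hR hn
    · obtain ⟨t', h1, h2⟩ := (h2 _ _ h).2.1 t hR (fun hz => hn (Or.inl hz))
      exact ⟨t', h1, Or.inl h2⟩
    · obtain ⟨t', h1, h2⟩ := (h2 _ _ h).2.2 t hR (fun hz => hn (Or.inl hz))
      exact ⟨t', h1, Or.inr h2⟩

lemma big_symm {N : Model W} {x y : W} (h : Big N x y) : Big N y x := by
  obtain ⟨Z, hZ, hxy⟩ := h
  exact ⟨_, symm_bisim hZ, Or.inr hxy⟩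

lemma big_bisim (N : Model W) [Nonempty W] : isCircBisim N (Big N) := by
  refine bisim_of_symm ⟨_, _, big_refl N (Classical.arbitrary W)⟩
    (fun x y => big_symm) ?_ ?_
  · rintro s s' ⟨Z, hZ, hss⟩ p
    exact ((hZ.2 _ _ hss).1) p
  · rintro s s' ⟨Z, hZ, hss⟩ t hR hn
    obtain ⟨t', h1, h2⟩ := (hZ.2 _ _ hss).2.1 t hR (fun hz => hn ⟨Z, hZ, hz⟩)
    exact ⟨t', h1, Z, hZ, h2⟩

lemma tg_symm {N : Model W} {x y : W} (h : Relation.TransGen (Big N) x y) :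
    Relation.TransGen (Big N) y x := by
  induction h with
  | single h => exact Relation.TransGen.single (big_symm h)
  | tail _ h ih => exact Relation.TransGen.head (big_symm h) ih

lemma tg_forth (N : Model W) [Nonempty W] :
    ∀ x z, Relation.TransGen (Big N) x z →
      ∀ u, N.R x u → ¬ Relation.TransGen (Big N) x u →
        ∃ v, N.R z v ∧ Relation.TransGen (Big N) u v := by
  intro x z h
  induction h using Relation.TransGen.head_induction_on with
  | single h =>
    intro u hR hn
    obtain ⟨v, h1, h2⟩ := ((big_bisim N).2 _ _ h).2.1 u hR
      (fun hb => hn (Relation.TransGen.single hb))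
    exact ⟨v, h1, Relation.TransGen.single h2⟩
  | head hxy hyz ih =>
    rename_i x' y
    intro u hR hn
    obtain ⟨v₁, h1, h2⟩ := ((big_bisim N).2 _ _ hxy).2.1 u hR
      (fun hb => hn (Relation.TransGen.single hb))
    by_cases hc : Relation.TransGen (Big N) y v₁
    · exact absurd (Relation.TransGen.head hxy
        (hc.trans (tg_symm (Relation.TransGen.single h2)))) hn
    · obtain ⟨v, h3, h4⟩ := ih v₁ h1 hc
      exact ⟨v, h3, (Relation.TransGen.single h2).trans h4⟩

lemma tg_bisim (N : Model W) [Nonempty W] :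
    isCircBisim N (Relation.TransGen (Big N)) := by
  refine bisim_of_symm
    ⟨_, _, Relation.TransGen.single (big_refl N (Classical.arbitrary W))⟩
    (fun x y => tg_symm) ?_ (tg_forth N)
  intro s s' h p
  induction h with
  | single h => exact ((big_bisim N).2 _ _ h).1 p
  | tail _ h ih => exact ih.trans (((big_bisim N).2 _ _ h).1 p)

lemma big_trans {N : Model W} [Nonempty W] {x y z : W}
    (h1 : Big N x y) (h2 : Big N y z) : Big N x z :=
  ⟨_, tg_bisim N, (Relation.TransGen.single h1).trans (Relation.TransGen.single h2)⟩


section Aux2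
variable {W : Type} [Nonempty W] {M : Model W}

lemma dsumR_swap {x y : W ⊕ W} (h : (dsum M M).R x y) :
    (dsum M M).R x.swap y.swap := by
  cases x <;> cases y <;> simpa [dsum] using h

lemma dsumV_swap {x : W ⊕ W} (p : ℕ) : (dsum M M).V p x.swap ↔ (dsum M M).V p x := by
  cases x <;> simp [dsum]

lemma conj_bisim {Z : (W ⊕ W) → (W ⊕ W) → Prop} (h : isCircBisim (dsum M M) Z) :
    isCircBisim (dsum M M) (fun x y => Z x.swap y.swap) := by
  obtain ⟨⟨a, b, hab⟩, h2⟩ := h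
  refine ⟨⟨a.swap, b.swap, by simpa using hab⟩, ?_⟩
  intro s s' hz
  obtain ⟨hinv, hf, hb⟩ := h2 _ _ hz
  refine ⟨?_, ?_, ?_⟩
  · intro p
    exact (dsumV_swap p).symm.trans ((hinv p).trans (dsumV_swap p))
  · intro t ht hnt
    obtain ⟨t', h1, h2⟩ := hf t.swap (dsumR_swap ht) hnt
    refine ⟨t'.swap, by simpa using dsumR_swap h1, by simpa using h2⟩
  · intro t' ht' hnt'
    obtain ⟨t, h1, h2⟩ := hb t'.swap (dsumR_swap ht') hnt'
    refine ⟨t.swap, by simpa using dsumR_swap h1, by simpa using h2⟩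

lemma big_swap {x y : W ⊕ W} (h : Big (dsum M M) x y) :
    Big (dsum M M) x.swap y.swap := by
  obtain ⟨Z, hZ, hxy⟩ := h
  exact ⟨_, conj_bisim hZ, by simpa using hxy⟩

lemma copy_bisim : isCircBisim (dsum M M)
    (fun x y => ∃ a : W, x = Sum.inl a ∧ y = Sum.inr a) := by
  refine ⟨⟨Sum.inl (Classical.arbitrary W), Sum.inr (Classical.arbitrary W), _, rfl, rfl⟩, ?_⟩
  rintro s s' ⟨a, rfl, rfl⟩
  refine ⟨fun p => by simp [dsum], ?_, ?_⟩
  · rintro (b | b) ht hnt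
    · exact ⟨Sum.inr b, by simpa [dsum] using ht, b, rfl, rfl⟩
    · exact absurd ht (by simp [dsum])
  · rintro (b | b) ht hnt
    · exact absurd ht (by simp [dsum])
    · exact ⟨Sum.inl b, by simpa [dsum] using ht, b, rfl, rfl⟩

lemma big_copy (a : W) : Big (dsum M M) (Sum.inl a) (Sum.inr a) :=
  ⟨_, copy_bisim, a, rfl, rfl⟩

lemma eqw_iff_big {s t : W} : eqw M s t ↔ Big (dsum M M) (Sum.inl s) (Sum.inr t) :=
  Iff.rfl

lemma eqw_refl (M : Model W) (s : W) : eqw M s s := big_copy s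

lemma eqw_symm {s t : W} (h : eqw M s t) : eqw M t s := by
  rw [eqw_iff_big] at *
  simpa using big_swap (big_symm h)

lemma eqw_trans {s t u : W} (h1 : eqw M s t) (h2 : eqw M t u) : eqw M s u := by
  rw [eqw_iff_big] at *
  have h3 : Big (dsum M M) (Sum.inr t) (Sum.inl u) := by
    simpa using big_swap h2
  exact big_trans h1 (big_trans h3 (big_copy u))

lemma eqw_of_rr {a b : W} (h : Big (dsum M M) (Sum.inr a) (Sum.inr b)) : eqw M a b :=
  big_trans (big_copy a) h

lemma eqw_V {s t : W} (h : eqw M s t) (p : ℕ) : M.V p s ↔ M.V p t := by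
  obtain ⟨Z, hZ, hst⟩ := h
  simpa [dsum] using (hZ.2 _ _ hst).1 p

lemma mem_cls {s t : W} : t ∈ cls M s ↔ eqw M s t := Iff.rfl

lemma cls_eq {s t : W} (h : eqw M s t) : cls M s = cls M t := by
  ext u
  exact ⟨fun hu => eqw_trans (eqw_symm h) hu, fun hu => eqw_trans h hu⟩

end Aux2

/-- The ∘-bisimulation contraction of M is ∘-bisimilar to M at every point. -/
theorem stmt15 (W : Type) [Nonempty W] (M : Model W) (s : W) :
    circBisimilar (contraction M) ⟨cls M s, s, rfl⟩ M s := by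
  classical
  refine ⟨fun x y =>
    (∃ A, x = Sum.inl A ∧ y = Sum.inl A) ∨
    (∃ A w, x = Sum.inl A ∧ y = Sum.inr w ∧ w ∈ A.1),
    ⟨⟨_, _, Or.inr ⟨⟨cls M s, s, rfl⟩, s, rfl, rfl, eqw_refl M s⟩⟩, ?_⟩,
    Or.inr ⟨⟨cls M s, s, rfl⟩, s, rfl, rfl, eqw_refl M s⟩⟩
  rintro x y (⟨A, rfl, rfl⟩ | ⟨A, w, rfl, rfl, hw⟩)
  · -- diagonal pair (inl A, inl A)
    refine ⟨fun p => Iff.rfl, ?_, ?_⟩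
    · rintro (B | b) ht hnt
      · exact ⟨Sum.inl B, ht, Or.inl ⟨B, rfl, rfl⟩⟩
      · exact absurd ht (by simp [dsum])
    · rintro (B | b) ht hnt
      · exact ⟨Sum.inl B, ht, Or.inl ⟨B, rfl, rfl⟩⟩
      · exact absurd ht (by simp [dsum])
  · -- cross pair (inl A, inr w) with w ∈ A
    obtain ⟨u, hu⟩ := A.2
    have huw : eqw M u w := by rw [hu] at hw; exact hw
    have hAw : A.1 = cls M w := by rw [hu]; exact cls_eq huw
    refine ⟨?_, ?_, ?_⟩
    · -- Inv
      intro p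
      show (∃ r, M.V p r ∧ A.1 = cls M r) ↔ M.V p w
      constructor
      · rintro ⟨r, hpr, hAr⟩
        have : eqw M r w := by
          have hcw : cls M r = cls M w := hAr ▸ hAw
          have : w ∈ cls M r := hcw ▸ (eqw_refl M w)
          exact this
        exact (eqw_V this p).mp hpr
      · intro hpw
        exact ⟨w, hpw, hAw⟩
    · -- Forth
      rintro (B | b) ht hnt
      · -- transition A [R] B
        obtain ⟨a, ha, b, hb, hab⟩ := ht
        have hAB : A ≠ B := fun h => hnt (Or.inl ⟨A, rfl, h ▸ rfl⟩)
        obtain ⟨u', hu'⟩ := B.2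
        have hub : eqw M u' b := by rw [hu'] at hb; exact hb
        have hBb : B.1 = cls M b := by rw [hu']; exact cls_eq hub
        have hwa : eqw M w a := by rw [hAw] at ha; exact ha
        have hbig : Big (dsum M M) (Sum.inl w) (Sum.inr a) := hwa
        have hRab : (dsum M M).R (Sum.inr a) (Sum.inr b) := hab
        by_cases hc : Big (dsum M M) (Sum.inr a) (Sum.inr b)
        · exfalso
          have heab : eqw M a b := eqw_of_rr hc
          have : B.1 = A.1 := by
            rw [hBb, hAw, cls_eq (eqw_trans hwa heab)]
          exact hAB (Subtype.ext this.symm)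
        · obtain ⟨t, htR, htZ⟩ := ((big_bisim (dsum M M)).2 _ _ hbig).2.2
            (Sum.inr b) hRab hc
          match t, htR, htZ with
          | Sum.inl w', htR, htZ =>
            have hw'b : eqw M w' b := htZ
            refine ⟨Sum.inr w', htR, Or.inr ⟨B, w', rfl, rfl, ?_⟩⟩
            rw [hBb]
            exact eqw_symm hw'b
          | Sum.inr w', htR, _ => exact absurd htR (by simp [dsum])
      · exact absurd ht (by simp [dsum])
    · -- Back
      rintro (B | w') ht hnt
      · exact absurd ht (by simp [dsum])
      · have hRww' : M.R w w' := ht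
        refine ⟨Sum.inl ⟨cls M w', w', rfl⟩, ?_,
          Or.inr ⟨⟨cls M w', w', rfl⟩, w', rfl, rfl, eqw_refl M w'⟩⟩
        exact ⟨w, hw, w', eqw_refl M w', hRww'⟩
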